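/- Large-deadline feasibility: in the star model with waiting times, if P ≥ n·τ and d i ≥ 2·(max_j λ j) for every i, then there is a valid assignment meeting the deadlines; indeed, m i = i·τ together with w i = 2·((max_j λ j) − λ i) is such an assignment, and every route has process time exactly 2·(max_j λ j). -/
import Mathlib

/-- The set of `τ` consecutive residues modulo `P` starting at `t`. -/
def slotSet (P τ : ℕ) (t : ℤ) : Set (ZMod P) :=
  {s | ∃ k : ℕ, k < τ ∧ s = ((t + k : ℤ) : ZMod P)}

/-- Forward slot set of route `i` in the star model with waiting times. -/
def fwdSlots (n P τ : ℕ) (m : Fin n → ℤ) (i : Fin n) : Set (ZMod P) :=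
  slotSet P τ (m i)

/-- Backward slot set of route `i` in the star model with waiting times. -/
def bwdSlots (n P τ : ℕ) (lam : Fin n → ℕ) (m : Fin n → ℤ) (w : Fin n → ℕ)
    (i : Fin n) : Set (ZMod P) :=
  slotSet P τ (m i + 2 * (lam i : ℤ) + (w i : ℤ))

/-- Validity in the star model with waiting times: the forward slot sets are
pairwise disjoint and the backward slot sets are pairwise disjoint. -/
def ValidW (n P τ : ℕ) (lam : Fin n → ℕ) (m : Fin n → ℤ) (w : Fin n → ℕ) : Prop :=
  ∀ i j : Fin n, i ≠ j →
    Disjoint (fwdSlots n P τ m i) (fwdSlots n P τ m j) ∧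
    Disjoint (bwdSlots n P τ lam m w i) (bwdSlots n P τ lam m w j)

/-- The process time of route `i`: `2·λ i + w i`. -/
def procTime (n : ℕ) (lam : Fin n → ℕ) (w : Fin n → ℕ) (i : Fin n) : ℕ :=
  2 * lam i + w i

lemma slot_disjoint (n P τ : ℕ) (hPn : n * τ ≤ P) (c : ℤ)
    (i j : Fin n) (hij : i ≠ j) :
    Disjoint (slotSet P τ (((i : ℕ) * τ : ℤ) + c)) (slotSet P τ (((j : ℕ) * τ : ℤ) + c)) := by
  rw [Set.disjoint_left]
  rintro s ⟨k, hk, rfl⟩ ⟨k', hk', heq⟩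
  have hmod : ((((i : ℕ) * τ + k : ℕ) : ℤ)) ≡ (((j : ℕ) * τ + k' : ℕ) : ℤ) [ZMOD P] := by
    have h := (ZMod.intCast_eq_intCast_iff _ _ _).mp heq
    have h2 := h.sub_right c
    have e1 : (i : ℕ) * τ + c + (k : ℤ) - c = (((i : ℕ) * τ + k : ℕ) : ℤ) := by push_cast; ring
    have e2 : (j : ℕ) * τ + c + (k' : ℤ) - c = (((j : ℕ) * τ + k' : ℕ) : ℤ) := by push_cast; ring
    rwa [e1, e2] at h2
  have hi : (i : ℕ) * τ + k < P := by
    calc (i : ℕ) * τ + k < ((i : ℕ) + 1) * τ := by nlinarith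
    _ ≤ n * τ := Nat.mul_le_mul_right τ i.isLt
    _ ≤ P := hPn
  have hj : (j : ℕ) * τ + k' < P := by
    calc (j : ℕ) * τ + k' < ((j : ℕ) + 1) * τ := by nlinarith
    _ ≤ n * τ := Nat.mul_le_mul_right τ j.isLt
    _ ≤ P := hPn
  have heqn : (i : ℕ) * τ + k = (j : ℕ) * τ + k' := by
    have h3 : ((((i : ℕ) * τ + k : ℕ) : ℤ)) % P = (((j : ℕ) * τ + k' : ℕ) : ℤ) % P := hmod
    have h4 : (((i : ℕ) * τ + k) % P : ℕ) = (((j : ℕ) * τ + k') % P : ℕ) := by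
      exact_mod_cast h3
    rwa [Nat.mod_eq_of_lt hi, Nat.mod_eq_of_lt hj] at h4
  have hv : (i : ℕ) = (j : ℕ) := by
    rcases Nat.lt_trichotomy (i : ℕ) (j : ℕ) with h | h | h
    · exfalso
      have : ((i : ℕ) + 1) * τ ≤ (j : ℕ) * τ := Nat.mul_le_mul_right τ h
      nlinarith
    · exact h
    · exfalso
      have : ((j : ℕ) + 1) * τ ≤ (i : ℕ) * τ := Nat.mul_le_mul_right τ h
      nlinarith
  exact hij (Fin.ext hv)

/-- Large-deadline feasibility: if `P ≥ n·τ` and all deadlines are at least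
twice the maximal latency, then `m i = i·τ` with `w i = 2·(max λ − λ i)` is a
valid assignment meeting the deadlines, and every route has process time
exactly twice the maximal latency. -/
theorem large_deadline_feasibility (n P τ : ℕ) (hn : 1 ≤ n) (hP : 1 ≤ P)
    (hτ : 1 ≤ τ) (lam d : Fin n → ℕ) (hPn : n * τ ≤ P)
    (hd : ∀ i : Fin n, 2 * Finset.univ.sup lam ≤ d i) :
    ValidW n P τ lam (fun i => ((i : ℕ) * τ : ℤ))
        (fun i => 2 * (Finset.univ.sup lam - lam i)) ∧
    (∀ i : Fin n,
        procTime n lam (fun i => 2 * (Finset.univ.sup lam - lam i)) i ≤ d i) ∧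
    (∀ i : Fin n,
        procTime n lam (fun i => 2 * (Finset.univ.sup lam - lam i)) i =
          2 * Finset.univ.sup lam) := by
  have hpt : ∀ i : Fin n,
      procTime n lam (fun i => 2 * (Finset.univ.sup lam - lam i)) i =
        2 * Finset.univ.sup lam := by
    intro i
    have hle : lam i ≤ Finset.univ.sup lam := Finset.le_sup (Finset.mem_univ i)
    simp only [procTime]
    omega
  refine ⟨?_, fun i => (hpt i).le.trans (hd i), hpt⟩
  intro i j hij
  constructor
  · have := slot_disjoint n P τ hPn 0 i j hij
    simpa [fwdSlots] using this
  · have := slot_disjoint n P τ hPn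
      (2 * (lam i : ℤ) + (2 * (Finset.univ.sup lam - lam i) : ℕ)) i j hij
    have hci : (2 * (lam i : ℤ) + (2 * (Finset.univ.sup lam - lam i) : ℕ)) =
        (2 * Finset.univ.sup lam : ℤ) := by
      have hle : lam i ≤ Finset.univ.sup lam := Finset.le_sup (Finset.mem_univ i)
      push_cast [Nat.cast_sub hle]
      ring
    have hcj : (2 * (lam j : ℤ) + (2 * (Finset.univ.sup lam - lam j) : ℕ)) =
        (2 * Finset.univ.sup lam : ℤ) := by
      have hle : lam j ≤ Finset.univ.sup lam := Finset.le_sup (Finset.mem_univ j)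
      push_cast [Nat.cast_sub hle]
      ring
    unfold bwdSlots
    have hj := slot_disjoint n P τ hPn
      (2 * (lam j : ℤ) + (2 * (Finset.univ.sup lam - lam j) : ℕ)) i j hij
    rw [hci] at this
    rw [hcj] at hj
    have ei : ((i : ℕ) * τ : ℤ) + 2 * (lam i : ℤ) + (2 * (Finset.univ.sup lam - lam i) : ℕ)
        = ((i : ℕ) * τ : ℤ) + 2 * Finset.univ.sup lam := by rw [add_assoc, hci]
    have ej : ((j : ℕ) * τ : ℤ) + 2 * (lam j : ℤ) + (2 * (Finset.univ.sup lam - lam j) : ℕ)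
        = ((j : ℕ) * τ : ℤ) + 2 * Finset.univ.sup lam := by rw [add_assoc, hcj]
    rw [ei, ej]
    exact this
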